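/- For every j ∈ {1,…,k-1} one has 1 + (t_j + t_{j+1})/2 ≤ (3π/4 + 1)·(1 + t_j). -/

import Mathlib

open Real MeasureTheory

lemma aux_meas : Measurable (fun s : ℝ => 1 / Real.sqrt (1 - s ^ 2)) := by
  have hc : Continuous fun s : ℝ => Real.sqrt (1 - s ^ 2) :=
    Real.continuous_sqrt.comp (continuous_const.sub (continuous_pow 2))
  exact measurable_const.div hc.measurable

lemma aux_int : IntervalIntegrable (fun s : ℝ => 1 / Real.sqrt (1 - s ^ 2)) volume (-1) 1 := by
  have hL : IntervalIntegrable (fun s : ℝ => 1 / Real.sqrt (1 - s ^ 2)) volume (-1) 0 := by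
    have hbase : IntervalIntegrable (fun x : ℝ => x ^ (-(1/2) : ℝ)) volume 0 1 :=
      intervalIntegral.intervalIntegrable_rpow' (by norm_num)
    have hshift : IntervalIntegrable (fun x : ℝ => (x + 1) ^ (-(1/2) : ℝ)) volume (-1) 0 := by
      have := hbase.comp_sub_right (-1)
      simpa [sub_neg_eq_add] using this
    refine hshift.mono_fun' aux_meas.aestronglyMeasurable ?_
    rw [Filter.EventuallyLE, ae_restrict_iff' measurableSet_uIoc]
    refine Filter.Eventually.of_forall ?_
    intro x hx
    rw [Set.uIoc_of_le (by norm_num : (-1:ℝ) ≤ 0)] at hx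
    obtain ⟨hx1, hx2⟩ := hx
    have h1x : (0:ℝ) < 1 + x := by linarith
    have hsq : Real.sqrt (1 + x) ≤ Real.sqrt (1 - x ^ 2) := by
      apply Real.sqrt_le_sqrt; nlinarith
    have hpos : (0:ℝ) < Real.sqrt (1 + x) := Real.sqrt_pos.mpr h1x
    have hr : (x + 1) ^ (-(1/2) : ℝ) = 1 / Real.sqrt (1 + x) := by
      rw [Real.rpow_neg (by linarith), ← Real.sqrt_eq_rpow, one_div, add_comm]
    rw [hr, Real.norm_eq_abs, abs_of_nonneg (by positivity)]
    exact one_div_le_one_div_of_le hpos hsq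
  have hR : IntervalIntegrable (fun s : ℝ => 1 / Real.sqrt (1 - s ^ 2)) volume 0 1 := by
    have hbase : IntervalIntegrable (fun x : ℝ => x ^ (-(1/2) : ℝ)) volume 0 1 :=
      intervalIntegral.intervalIntegrable_rpow' (by norm_num)
    have hshift : IntervalIntegrable (fun x : ℝ => (1 - x) ^ (-(1/2) : ℝ)) volume 0 1 := by
      have := hbase.comp_sub_left 1
      simpa using this.symm
    refine hshift.mono_fun' aux_meas.aestronglyMeasurable ?_
    rw [Filter.EventuallyLE, ae_restrict_iff' measurableSet_uIoc]
    refine Filter.Eventually.of_forall ?_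
    intro x hx
    rw [Set.uIoc_of_le (by norm_num : (0:ℝ) ≤ 1)] at hx
    obtain ⟨hx1, hx2⟩ := hx
    rcases eq_or_lt_of_le hx2 with h1 | h1
    · subst h1
      simp
    have h1x : (0:ℝ) < 1 - x := by linarith
    have hsq : Real.sqrt (1 - x) ≤ Real.sqrt (1 - x ^ 2) := by
      apply Real.sqrt_le_sqrt; nlinarith
    have hpos : (0:ℝ) < Real.sqrt (1 - x) := Real.sqrt_pos.mpr h1x
    have hr : (1 - x) ^ (-(1/2) : ℝ) = 1 / Real.sqrt (1 - x) := by
      rw [Real.rpow_neg (by linarith), ← Real.sqrt_eq_rpow, one_div]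
    rw [hr, Real.norm_eq_abs, abs_of_nonneg (by positivity)]
    exact one_div_le_one_div_of_le hpos hsq
  exact hL.trans hR

lemma aux_sub {a b : ℝ} (ha : -1 ≤ a) (hb : b ≤ 1) (hab : a ≤ b) :
    IntervalIntegrable (fun s : ℝ => 1 / Real.sqrt (1 - s ^ 2)) volume a b := by
  apply aux_int.mono_set
  rw [Set.uIcc_of_le hab, Set.uIcc_of_le (by norm_num : (-1:ℝ) ≤ 1)]
  exact Set.Icc_subset_Icc ha hb

lemma aux_val {a b : ℝ} (ha : -1 ≤ a) (hb : b ≤ 1) (hab : a ≤ b) :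
    ∫ s in a..b, 1 / Real.sqrt (1 - s ^ 2) = Real.arcsin b - Real.arcsin a := by
  apply intervalIntegral.integral_eq_sub_of_hasDeriv_right_of_le hab
    Real.continuous_arcsin.continuousOn
  · intro x hx
    exact (Real.hasDerivAt_arcsin (by rintro rfl; exact absurd hx.1 (by linarith))
      (by rintro rfl; exact absurd hx.2 (by linarith))).hasDerivWithinAt
  · exact aux_sub ha hb hab

set_option maxHeartbeats 1000000 in
theorem stmt_12 (k : ℕ) (hk : 2 ≤ k) (g : ℝ → ℝ)
    (hg0 : ∀ x ∈ Set.Icc (-1:ℝ) 1, 0 ≤ g x)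
    (hgmono : MonotoneOn g (Set.Icc (-1:ℝ) 1))
    (hgconc : ConcaveOn ℝ (Set.Icc (-1:ℝ) 1) g)
    (hgconv : ConvexOn ℝ (Set.Ioo (-1:ℝ) 1) (fun s => g s / (1 + s)))
    (hnorm : (1 / π) * ∫ s in (-1:ℝ)..1, g s / Real.sqrt (1 - s ^ 2) = 1)
    (t : ℕ → ℝ)
    (ht0 : t 0 = -1) (htk : t k = 1)
    (htmem : ∀ j ≤ k, t j ∈ Set.Icc (-1:ℝ) 1)
    (htmono : ∀ i j : ℕ, i < j → j ≤ k → t i < t j)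
    (htW : ∀ j ≤ k,
      ((k : ℝ) / π) * ∫ s in (-1:ℝ)..(t j), g s / Real.sqrt (1 - s ^ 2) = (j : ℝ))
    :
    ∀ j : ℕ, 1 ≤ j → j < k →
      1 + (t j + t (j + 1)) / 2 ≤ (3 * π / 4 + 1) * (1 + t j) := by
  intro j hj1 hjk
  have hπ : (0:ℝ) < π := Real.pi_pos
  have hkpos : (0:ℝ) < (k:ℝ) := by exact_mod_cast (by omega : 0 < k)
  have hj1k : j + 1 ≤ k := hjk
  have htj : t j ∈ Set.Icc (-1:ℝ) 1 := htmem j hjk.le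
  have htj1 : t (j+1) ∈ Set.Icc (-1:ℝ) 1 := htmem (j+1) hj1k
  have htjlt : t j < t (j+1) := htmono j (j+1) (by omega) hj1k
  have htjgt : (-1:ℝ) < t j := by
    have := htmono 0 j (by omega) hjk.le
    rwa [ht0] at this
  -- values of the partial integrals
  have hI : ∀ m ≤ k, ∫ s in (-1:ℝ)..(t m), g s / Real.sqrt (1 - s ^ 2)
      = (m : ℝ) * π / (k : ℝ) := by
    intro m hm
    have h := htW m hm
    field_simp at h ⊢
    linarith
  have hIj := hI j hjk.le
  have hIj1 := hI (j+1) hj1k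
  -- integrability of f
  have hIIbig : IntervalIntegrable (fun s => g s / Real.sqrt (1 - s ^ 2)) volume (-1) (t (j+1)) := by
    by_contra hcon
    have h0 := intervalIntegral.integral_undef hcon
    rw [h0] at hIj1
    push_cast at hIj1
    have : (0:ℝ) < ((j:ℝ)+1) * π / (k:ℝ) := by positivity
    linarith
  have hII1 : IntervalIntegrable (fun s => g s / Real.sqrt (1 - s ^ 2)) volume (-1) (t j) := by
    apply hIIbig.mono_set
    rw [Set.uIcc_of_le (by linarith [htj.1] : (-1:ℝ) ≤ t j),
      Set.uIcc_of_le (by linarith [htj.1] : (-1:ℝ) ≤ t (j+1))]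
    exact Set.Icc_subset_Icc le_rfl htjlt.le
  have hII2 : IntervalIntegrable (fun s => g s / Real.sqrt (1 - s ^ 2)) volume (t j) (t (j+1)) := by
    apply hIIbig.mono_set
    rw [Set.uIcc_of_le htjlt.le, Set.uIcc_of_le (by linarith [htj.1] : (-1:ℝ) ≤ t (j+1))]
    exact Set.Icc_subset_Icc htj.1 le_rfl
  have hsplit := intervalIntegral.integral_add_adjacent_intervals hII1 hII2
  have hImid : ∫ s in (t j)..(t (j+1)), g s / Real.sqrt (1 - s ^ 2) = π / (k:ℝ) := by
    rw [hIj, hIj1] at hsplit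
    push_cast at hsplit
    field_simp at hsplit ⊢
    linarith
  set G := g (t j) with hGdef
  have hG0 : 0 ≤ G := hg0 (t j) htj
  -- upper estimate on [-1, t j]
  have hup : (j : ℝ) * π / (k:ℝ) ≤ G * (Real.arcsin (t j) + π / 2) := by
    have hmono := intervalIntegral.integral_mono_on (μ := volume)
      (by linarith [htj.1] : (-1:ℝ) ≤ t j) hII1
      ((aux_sub (le_refl (-1:ℝ)) htj.2 (by linarith [htj.1])).const_mul G)
      (f := fun s => g s / Real.sqrt (1 - s ^ 2))
      (g := fun s => G * (1 / Real.sqrt (1 - s ^ 2)))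
      ?_
    · rw [intervalIntegral.integral_const_mul, aux_val (le_refl (-1:ℝ)) htj.2
        (by linarith [htj.1]), Real.arcsin_neg_one] at hmono
      rw [← hIj]
      convert hmono using 2
      ring
    · intro s hs
      have hsmem : s ∈ Set.Icc (-1:ℝ) 1 := ⟨hs.1, le_trans hs.2 htj.2⟩
      by_cases h0 : Real.sqrt (1 - s ^ 2) = 0
      · simp [h0]
      · have hpos : 0 < Real.sqrt (1 - s ^ 2) :=
          lt_of_le_of_ne (Real.sqrt_nonneg _) (Ne.symm h0)
        show g s / Real.sqrt (1 - s ^ 2) ≤ G * (1 / Real.sqrt (1 - s ^ 2))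
        rw [mul_one_div]
        exact (div_le_div_iff_of_pos_right hpos).mpr (hgmono hsmem htj hs.2)
  -- lower estimate on [t j, t (j+1)]
  have hlow : G * (Real.arcsin (t (j+1)) - Real.arcsin (t j)) ≤ π / (k:ℝ) := by
    have hmono := intervalIntegral.integral_mono_on (μ := volume)
      htjlt.le
      ((aux_sub htj.1 htj1.2 htjlt.le).const_mul G)
      hII2
      (f := fun s => G * (1 / Real.sqrt (1 - s ^ 2)))
      (g := fun s => g s / Real.sqrt (1 - s ^ 2))
      ?_
    · rw [intervalIntegral.integral_const_mul, aux_val htj.1 htj1.2 htjlt.le, hImid] at hmono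
      exact hmono
    · intro s hs
      have hsmem : s ∈ Set.Icc (-1:ℝ) 1 := ⟨le_trans htj.1 hs.1, le_trans hs.2 htj1.2⟩
      by_cases h0 : Real.sqrt (1 - s ^ 2) = 0
      · simp [h0]
      · have hpos : 0 < Real.sqrt (1 - s ^ 2) :=
          lt_of_le_of_ne (Real.sqrt_nonneg _) (Ne.symm h0)
        show G * (1 / Real.sqrt (1 - s ^ 2)) ≤ g s / Real.sqrt (1 - s ^ 2)
        rw [mul_one_div]
        exact (div_le_div_iff_of_pos_right hpos).mpr (hgmono htj hsmem hs.1)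
  -- positivity
  have harc : -(π/2) < Real.arcsin (t j) := by
    have := Real.strictMonoOn_arcsin (by norm_num : (-1:ℝ) ∈ Set.Icc (-1:ℝ) 1) htj htjgt
    rwa [Real.arcsin_neg_one] at this
  have hφpos : 0 < Real.arcsin (t j) + π / 2 := by linarith
  have hGpos : 0 < G := by
    rcases lt_or_eq_of_le hG0 with h | h
    · exact h
    · exfalso
      rw [← h] at hup
      have hjp : (0:ℝ) < (j:ℝ) * π / (k:ℝ) := by
        have : (1:ℝ) ≤ (j:ℝ) := by exact_mod_cast hj1
        positivity
      simp at hup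
      linarith
  -- key inequality: ψ ≤ 2 φ
  set φ := Real.arcsin (t j) + π / 2 with hφdef
  set ψ := Real.arcsin (t (j+1)) + π / 2 with hψdef
  clear_value φ ψ
  have hkey : ψ ≤ 2 * φ := by
    have h1 : π / (k:ℝ) ≤ (j:ℝ) * π / (k:ℝ) := by
      have hj : (1:ℝ) ≤ (j:ℝ) := by exact_mod_cast hj1
      rw [div_le_div_iff_of_pos_right hkpos]
      nlinarith
    have hchain : G * (ψ - φ) ≤ G * φ := by
      have : Real.arcsin (t (j+1)) - Real.arcsin (t j) = ψ - φ := by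
        rw [hφdef, hψdef]; ring
      rw [← this]
      exact (hlow.trans h1).trans hup
    have := le_of_mul_le_mul_left hchain hGpos
    linarith
  -- trig bounds
  have hφle : φ ≤ π := by
    have := Real.arcsin_le_pi_div_two (t j); rw [hφdef]; linarith
  have hψ0 : 0 ≤ ψ := by
    have := Real.neg_pi_div_two_le_arcsin (t (j+1)); rw [hψdef]; linarith
  have hψle : ψ ≤ π := by
    have := Real.arcsin_le_pi_div_two (t (j+1)); rw [hψdef]; linarith
  have hcosφ : Real.cos φ = - t j := by
    rw [hφdef, Real.cos_add_pi_div_two, Real.sin_arcsin htj.1 htj.2]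
  have hcosψ : Real.cos ψ = - t (j+1) := by
    rw [hψdef, Real.cos_add_pi_div_two, Real.sin_arcsin htj1.1 htj1.2]
  have hmain : 1 - Real.cos ψ ≤ 4 * (1 - Real.cos φ) := by
    by_cases hc : φ ≤ π / 2
    · have h2φ : 2 * φ ≤ π := by linarith
      have hco : Real.cos (2 * φ) ≤ Real.cos ψ :=
        Real.cos_le_cos_of_nonneg_of_le_pi hψ0 h2φ hkey
      rw [Real.cos_two_mul] at hco
      nlinarith [Real.cos_le_one φ, Real.neg_one_le_cos φ]
    · have hcφ : Real.cos φ ≤ 0 :=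
        Real.cos_nonpos_of_pi_div_two_le_of_le (not_le.mp hc).le (by linarith)
      nlinarith [Real.neg_one_le_cos ψ]
  rw [hcosφ, hcosψ] at hmain
  nlinarith [Real.two_le_pi, htj.1, hmain]
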